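/- For every integer n ≥ 2, k_n(1, π/n) + δ_n = 2·δ_{2n} and k_n(1, π/n) − δ_n = 2·(δ_{2n} − δ_n); moreover k_n(1, π/n) − δ_n > 0. -/

import Mathlib

/-- `δ_n = (1/(4n))·∑_{l=1}^{n−1} 1/sin(πl/n) − 1`. -/
noncomputable def deltaN (n : ℕ) : ℝ :=
  (1 / (4 * (n : ℝ))) * ∑ l ∈ Finset.Icc 1 (n - 1), 1 / Real.sin (Real.pi * l / n) - 1

/-- `h_n(x,θ) = (1/n)·∑_{l=1}^{n} (1 − x·cos(2πl/n + θ))/(1 + x² − 2x·cos(2πl/n + θ))^{3/2}`. -/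
noncomputable def hN (n : ℕ) (x θ : ℝ) : ℝ :=
  (1 / (n : ℝ)) * ∑ l ∈ Finset.Icc 1 n,
    (1 - x * Real.cos (2 * Real.pi * l / n + θ)) /
      (1 + x ^ 2 - 2 * x * Real.cos (2 * Real.pi * l / n + θ)) ^ ((3 : ℝ) / 2)

/-- `k_n(x,θ) = h_n(x,θ) − 1`. -/
noncomputable def kN (n : ℕ) (x θ : ℝ) : ℝ := hN n x θ - 1


-- auxiliary lemmas
lemma one_sub_cos_two_mul (x : ℝ) : 1 - Real.cos (2*x) = 2 * Real.sin x ^ 2 := by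
  rw [Real.cos_two_mul]; nlinarith [Real.sin_sq_add_cos_sq x]

lemma term_eq {c s : ℝ} (hs : 0 < s) (h1 : 1 - c = 2 * s ^ 2) :
    (1 - 1 * c) / (1 + 1 ^ 2 - 2 * 1 * c) ^ ((3:ℝ)/2) = 1 / (4 * s) := by
  have hs' : s ≠ 0 := hs.ne'
  have hbase : 1 + 1 ^ 2 - 2 * 1 * c = (2*s)^2 := by nlinarith
  rw [hbase]
  have h2 : ((2*s)^2 : ℝ) ^ ((3:ℝ)/2) = (2*s)^3 := by
    rw [← Real.rpow_natCast (2*s) 2, ← Real.rpow_mul (by positivity), ← Real.rpow_natCast (2*s) 3]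
    norm_num
  rw [h2]
  have h3 : (1 : ℝ) - 1 * c = 2 * s^2 := by linarith
  rw [h3]; field_simp; ring

lemma mid_ineq {m d : ℝ} (ha : 0 < Real.sin (m - d)) (hb : 0 < Real.sin (m + d))
    (hm : 0 < Real.sin m) :
    2 / Real.sin m ≤ 1 / Real.sin (m - d) + 1 / Real.sin (m + d) := by
  set p := Real.sin (m-d) with hp'
  set q := Real.sin (m+d) with hq'
  set t := Real.sin m with ht'
  have hprod : p * q ≤ t^2 := by
    have hp : p = t * Real.cos d - Real.cos m * Real.sin d := by
      rw [hp', Real.sin_sub, ht']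
    have hq : q = t * Real.cos d + Real.cos m * Real.sin d := by
      rw [hq', Real.sin_add, ht']
    nlinarith [Real.sin_sq_add_cos_sq m, Real.sin_sq_add_cos_sq d,
      sq_nonneg (Real.cos m * Real.sin d), sq_nonneg (Real.sin m * Real.sin d)]
  rw [div_add_div _ _ ha.ne' hb.ne', div_le_div_iff₀ hm (mul_pos ha hb)]
  have h2 : (2*(p*q))^2 ≤ ((q+p)*t)^2 := by
    nlinarith [mul_le_mul_of_nonneg_left hprod (sq_nonneg (p+q)),
      mul_nonneg (mul_pos ha hb).le (sq_nonneg (p-q))]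
  have h4 : (1 * q + p * 1) * t = (q+p)*t := by ring
  rw [h4]
  nlinarith [h2, mul_pos (mul_pos ha hb) hm, mul_pos (add_pos hb ha) hm,
    sq_nonneg (2*(p*q) - (q+p)*t)]

lemma sum_range_even_odd (f : ℕ → ℝ) (k : ℕ) :
    ∑ m ∈ Finset.range (2*k), f m
      = ∑ j ∈ Finset.range k, f (2*j) + ∑ j ∈ Finset.range k, f (2*j+1) := by
  induction k with
  | zero => simp
  | succ k ih =>
    have h : 2*(k+1) = (2*k) + 1 + 1 := by ring
    rw [h, Finset.sum_range_succ, Finset.sum_range_succ, ih, Finset.sum_range_succ,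
      Finset.sum_range_succ]
    ring

lemma sum_Icc_one (f : ℕ → ℝ) (m : ℕ) :
    ∑ l ∈ Finset.Icc 1 m, f l = ∑ i ∈ Finset.range m, f (i+1) := by
  rw [← Finset.Ico_add_one_right_eq_Icc, Finset.sum_Ico_eq_sum_range]
  simp [Nat.add_comm]

lemma sin_arg_pos (n m : ℕ) (hn : 1 ≤ n) (h1 : 1 ≤ m) (h2 : m ≤ 2*n - 1) :
    0 < Real.sin (Real.pi * m / (2*(n:ℝ))) := by
  have hm : (1:ℝ) ≤ m := by exact_mod_cast h1
  have hn' : (1:ℝ) ≤ n := by exact_mod_cast hn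
  have hmu : (m:ℝ) < 2*n := by exact_mod_cast (by omega : m < 2*n)
  apply Real.sin_pos_of_pos_of_lt_pi
  · positivity
  · rw [div_lt_iff₀ (by positivity)]
    nlinarith [Real.pi_pos]

/-- auxiliary: `g_n(m) = 1/sin(πm/(2n))`. -/
noncomputable def gA (n m : ℕ) : ℝ := 1 / Real.sin (Real.pi * m / (2 * (n:ℝ)))

lemma gA_pos (n m : ℕ) (hn : 1 ≤ n) (h1 : 1 ≤ m) (h2 : m ≤ 2*n - 1) : 0 < gA n m :=
  one_div_pos.mpr (sin_arg_pos n m hn h1 h2)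

lemma gA_zero (n : ℕ) : gA n 0 = 0 := by simp [gA]

lemma gA_even (n l : ℕ) (hn0 : (n:ℝ) ≠ 0) :
    gA n (2*l) = 1 / Real.sin (Real.pi * l / n) := by
  unfold gA
  have h : Real.pi * ((2*l:ℕ):ℝ) / (2*(n:ℝ)) = Real.pi * l / n := by
    push_cast; field_simp
  rw [h]

lemma gA_mid (n i : ℕ) (hn : 1 ≤ n) (hi : i + 2 ≤ n) :
    2 * gA n (2*(i+1)) ≤ gA n (2*i+1) + gA n (2*(i+1)+1) := by
  set m : ℝ := Real.pi * ((2*(i+1):ℕ):ℝ) / (2*(n:ℝ)) with hm'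
  set d : ℝ := Real.pi / (2*(n:ℝ)) with hd'
  have hd1 : Real.pi * ((2*i+1:ℕ):ℝ)/(2*(n:ℝ)) = m - d := by rw [hm', hd']; push_cast; ring
  have hd2 : Real.pi * ((2*(i+1)+1:ℕ):ℝ)/(2*(n:ℝ)) = m + d := by rw [hm', hd']; push_cast; ring
  have ha : 0 < Real.sin (m - d) := by
    rw [← hd1]; exact sin_arg_pos n (2*i+1) hn (by omega) (by omega)
  have hb : 0 < Real.sin (m + d) := by
    rw [← hd2]; exact sin_arg_pos n (2*(i+1)+1) hn (by omega) (by omega)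
  have hmpos : 0 < Real.sin m := by
    rw [hm']; exact sin_arg_pos n (2*(i+1)) hn (by omega) (by omega)
  have h := mid_ineq ha hb hmpos
  unfold gA
  rw [hd1, hd2, ← hm', mul_one_div]
  exact h

lemma hN_term (n l : ℕ) (hn : 1 ≤ n) (hl : 1 ≤ l) (hl2 : l ≤ n - 1) :
    (1 - 1 * Real.cos (2 * Real.pi * l / n + Real.pi / n)) /
      (1 + 1 ^ 2 - 2 * 1 * Real.cos (2 * Real.pi * l / n + Real.pi / n)) ^ ((3:ℝ)/2)
      = 1/4 * gA n (2*l+1) := by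
  have hn0 : (n:ℝ) ≠ 0 := Nat.cast_ne_zero.mpr (by omega)
  have hs : 0 < Real.sin (Real.pi * ((2*l+1:ℕ):ℝ) / (2*(n:ℝ))) :=
    sin_arg_pos n (2*l+1) hn (by omega) (by omega)
  have hang : 2 * Real.pi * (l:ℝ) / n + Real.pi / n
      = 2 * (Real.pi * ((2*l+1:ℕ):ℝ) / (2*(n:ℝ))) := by
    push_cast; field_simp
  have h1 : 1 - Real.cos (2 * Real.pi * (l:ℝ) / n + Real.pi / n)
      = 2 * (Real.sin (Real.pi * ((2*l+1:ℕ):ℝ)/(2*(n:ℝ))))^2 := by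
    rw [hang]; exact one_sub_cos_two_mul _
  rw [term_eq hs h1]
  unfold gA; ring

lemma hN_term_top (n : ℕ) (hn : 1 ≤ n) :
    (1 - 1 * Real.cos (2 * Real.pi * n / n + Real.pi / n)) /
      (1 + 1 ^ 2 - 2 * 1 * Real.cos (2 * Real.pi * n / n + Real.pi / n)) ^ ((3:ℝ)/2)
      = 1/4 * gA n 1 := by
  have hn0 : (n:ℝ) ≠ 0 := Nat.cast_ne_zero.mpr (by omega)
  have hs : 0 < Real.sin (Real.pi * ((1:ℕ):ℝ)/(2*(n:ℝ))) :=
    sin_arg_pos n 1 hn le_rfl (by omega)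
  have hA : 2*Real.pi*(n:ℝ)/n + Real.pi/n
      = 2 * (Real.pi * ((1:ℕ):ℝ)/(2*(n:ℝ))) + 2*Real.pi := by
    push_cast; field_simp; ring
  have h1 : 1 - Real.cos (2*Real.pi*(n:ℝ)/n + Real.pi/n)
      = 2 * (Real.sin (Real.pi * ((1:ℕ):ℝ)/(2*(n:ℝ))))^2 := by
    rw [hA, Real.cos_add_two_pi]
    exact one_sub_cos_two_mul _
  rw [term_eq hs h1]
  unfold gA; ring

/-- `k_n(1,π/n) + δ_n = 2δ_{2n}`, `k_n(1,π/n) − δ_n = 2(δ_{2n} − δ_n)` and the latter is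
positive. -/
theorem kN_one_shift_relations (n : ℕ) (hn : 2 ≤ n) :
    kN n 1 (Real.pi / n) + deltaN n = 2 * deltaN (2 * n) ∧
    kN n 1 (Real.pi / n) - deltaN n = 2 * (deltaN (2 * n) - deltaN n) ∧
    0 < kN n 1 (Real.pi / n) - deltaN n := by
  obtain ⟨k, rfl⟩ : ∃ k, n = k + 1 := ⟨n - 1, by omega⟩
  have hk : 1 ≤ k := by omega
  have hn1 : 1 ≤ k + 1 := by omega
  have hC0 : ((k+1:ℕ):ℝ) ≠ 0 := Nat.cast_ne_zero.mpr (by omega)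
  have hCpos : (0:ℝ) < ((k+1:ℕ):ℝ) := by positivity
  set O : ℝ := ∑ j ∈ Finset.range (k+1), gA (k+1) (2*j+1) with hO
  set E : ℝ := ∑ j ∈ Finset.range (k+1), gA (k+1) (2*j) with hE
  -- E as a shifted sum
  have hEsum : E = ∑ i ∈ Finset.range k, gA (k+1) (2*(i+1)) := by
    rw [hE, Finset.sum_range_succ']
    simp [gA_zero]
  -- hN value
  have hHN : hN (k+1) 1 (Real.pi / ((k+1:ℕ):ℝ)) = 1/(4*((k+1:ℕ):ℝ)) * O := by
    simp only [hN]
    rw [sum_Icc_one, Finset.sum_range_succ]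
    have hmain : ∀ i ∈ Finset.range k,
        (1 - 1 * Real.cos (2 * Real.pi * ((i+1:ℕ):ℝ) / ((k+1:ℕ):ℝ) + Real.pi / ((k+1:ℕ):ℝ))) /
          (1 + 1 ^ 2 - 2 * 1 * Real.cos (2 * Real.pi * ((i+1:ℕ):ℝ) / ((k+1:ℕ):ℝ) +
            Real.pi / ((k+1:ℕ):ℝ))) ^ ((3:ℝ)/2)
          = 1/4 * gA (k+1) (2*(i+1)+1) := by
      intro i hi
      have hi' : i < k := Finset.mem_range.mp hi
      exact hN_term (k+1) (i+1) hn1 (by omega) (by omega)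
    rw [Finset.sum_congr rfl hmain, hN_term_top (k+1) hn1]
    have hOsum : O = ∑ i ∈ Finset.range k, gA (k+1) (2*(i+1)+1) + gA (k+1) 1 := by
      rw [hO, Finset.sum_range_succ']
    rw [hOsum, ← Finset.mul_sum]
    try ring
  -- deltaN (k+1)
  have hDN : deltaN (k+1) = 1/(4*((k+1:ℕ):ℝ)) * E - 1 := by
    simp only [deltaN, Nat.add_sub_cancel]
    rw [sum_Icc_one, hEsum]
    have hmain : ∀ i ∈ Finset.range k,
        (1:ℝ) / Real.sin (Real.pi * ((i+1:ℕ):ℝ) / ((k+1:ℕ):ℝ)) = gA (k+1) (2*(i+1)) := by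
      intro i hi
      exact (gA_even (k+1) (i+1) hC0).symm
    rw [Finset.sum_congr rfl hmain]
  -- deltaN (2*(k+1))
  have hD2 : deltaN (2*(k+1)) = 1/(8*((k+1:ℕ):ℝ)) * (O + E) - 1 := by
    simp only [deltaN]
    have h1 : 2*(k+1) - 1 = 2*k+1 := by omega
    rw [h1]
    have hmain : ∀ l ∈ Finset.Icc 1 (2*k+1),
        (1:ℝ) / Real.sin (Real.pi * (l:ℝ) / ((2*(k+1):ℕ):ℝ)) = gA (k+1) l := by
      intro l _
      have hcast : ((2*(k+1):ℕ):ℝ) = 2 * ((k+1:ℕ):ℝ) := by push_cast; ring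
      rw [hcast]; rfl
    rw [Finset.sum_congr rfl hmain, sum_Icc_one]
    have h2 : ∑ i ∈ Finset.range (2*k+1), gA (k+1) (i+1)
        = ∑ m ∈ Finset.range (2*(k+1)), gA (k+1) m := by
      have h3 : 2*(k+1) = (2*k+1) + 1 := by omega
      have h4 := Finset.sum_range_succ' (gA (k+1)) (2*k+1)
      rw [h3, h4]
      simp [gA_zero]
    rw [h2, sum_range_even_odd (gA (k+1)) (k+1), ← hE, ← hO]
    have hcast2 : ((2*(k+1):ℕ):ℝ) = 2 * ((k+1:ℕ):ℝ) := by push_cast; ring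
    rw [hcast2]
    ring
  -- positivity: E < O
  have hOE : E < O := by
    have hkey : ∀ i ∈ Finset.range k,
        2 * gA (k+1) (2*(i+1)) ≤ gA (k+1) (2*i+1) + gA (k+1) (2*(i+1)+1) := by
      intro i hi
      have hi' : i < k := Finset.mem_range.mp hi
      exact gA_mid (k+1) i hn1 (by omega)
    have hsum := Finset.sum_le_sum hkey
    rw [Finset.sum_add_distrib, ← Finset.mul_sum] at hsum
    have hA : ∑ i ∈ Finset.range k, gA (k+1) (2*i+1) = O - gA (k+1) (2*k+1) := by
      rw [hO, Finset.sum_range_succ]; ring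
    have hB : ∑ i ∈ Finset.range k, gA (k+1) (2*(i+1)+1) = O - gA (k+1) 1 := by
      have h4 := Finset.sum_range_succ' (fun j => gA (k+1) (2*j+1)) k
      rw [hO, h4]
      norm_num
    have hg1 : 0 < gA (k+1) 1 := gA_pos (k+1) 1 hn1 le_rfl (by omega)
    have hg2 : 0 < gA (k+1) (2*k+1) := gA_pos (k+1) (2*k+1) hn1 (by omega) (by omega)
    rw [hA, hB, ← hEsum] at hsum
    linarith
  -- assemble
  have hKN : kN (k+1) 1 (Real.pi / ((k+1:ℕ):ℝ)) = 1/(4*((k+1:ℕ):ℝ)) * O - 1 := by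
    rw [kN, hHN]
  refine ⟨?_, ?_, ?_⟩
  · rw [hKN, hDN, hD2]; ring
  · rw [hKN, hDN, hD2]; ring
  · rw [hKN, hDN]
    have hpos : 0 < 1/(4*((k+1:ℕ):ℝ)) * (O - E) :=
      mul_pos (by positivity) (sub_pos.mpr hOE)
    nlinarith [hpos]
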